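/- arXiv:2009.04032 — 2 statements merged into one kernel-verified Lean document; each statement's English description precedes it below -/
import Mathlib

section
/- If x ≺_w y and a ≺_w b are nonnegative vectors in ℝ^n each labeled in descending order, then the entrywise product xa is weakly majorized by yb, i.e., for each 1 ≤ k ≤ n, ∑_{i=1}^k x_i a_i ≤ ∑_{i=1}^k y_i b_i. -/
open Finset

/-- A vector rearranged in increasing order. -/
noncomputable def ascSort {n : ℕ} (a : Fin n → ℝ) : Fin n → ℝ :=
  a ∘ Tuple.sort a

/-- A vector rearranged in decreasing order. -/
noncomputable def descSort {n : ℕ} (a : Fin n → ℝ) : Fin n → ℝ :=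
  fun i => ascSort a i.rev

/-- The sum of the entries of `a` with index at most `k`. -/
noncomputable def partialSum {n : ℕ} (a : Fin n → ℝ) (k : Fin n) : ℝ :=
  ∑ i ∈ Finset.univ.filter (fun i => i ≤ k), a i

/-- The product of the entries of `a` with index at most `k`. -/
noncomputable def partialProd {n : ℕ} (a : Fin n → ℝ) (k : Fin n) : ℝ :=
  ∏ i ∈ Finset.univ.filter (fun i => i ≤ k), a i

/-- Weak majorization: partial sums of the decreasing rearrangement of `a` are
bounded by those of `b`. -/
def WeakMaj {n : ℕ} (a b : Fin n → ℝ) : Prop :=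
  ∀ k : Fin n, partialSum (descSort a) k ≤ partialSum (descSort b) k

/-- Extension of a `Fin n` vector to `ℕ` by zero. -/
noncomputable def extZ {n : ℕ} (f : Fin n → ℝ) : ℕ → ℝ :=
  fun i => if h : i < n then f ⟨i, h⟩ else 0

lemma abel_le : ∀ (m : ℕ) (u v c : ℕ → ℝ),
    (∀ i j, i ≤ j → j < m → c j ≤ c i) →
    (∀ i, i < m → 0 ≤ c i) →
    (∀ j, j ≤ m → ∑ i ∈ Finset.range j, u i ≤ ∑ i ∈ Finset.range j, v i) →
    ∑ i ∈ Finset.range m, u i * c i ≤ ∑ i ∈ Finset.range m, v i * c i := by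
  intro m
  induction m with
  | zero => intro u v c _ _ _; simp
  | succ m ih =>
    intro u v c hmono hnn hS
    have key : ∀ w : ℕ → ℝ, ∑ i ∈ Finset.range (m+1), w i * c i
        = (∑ i ∈ Finset.range m, w i * (c i - c m))
          + (∑ i ∈ Finset.range (m+1), w i) * c m := by
      intro w
      simp [Finset.sum_range_succ, mul_sub, Finset.sum_sub_distrib, add_mul,
        Finset.sum_mul]
      ring
    rw [key u, key v]
    refine add_le_add ?_ ?_
    · refine ih u v _ ?_ ?_ ?_
      · intro i j hij hj
        exact sub_le_sub_right (hmono i j hij (hj.trans (Nat.lt_succ_self m))) _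
      · intro i hi
        exact sub_nonneg.2 (hmono i m (Nat.le_of_lt hi) (Nat.lt_succ_self m))
      · intro j hj
        exact hS j (hj.trans (Nat.le_succ m))
    · exact mul_le_mul_of_nonneg_right (hS (m+1) le_rfl) (hnn m (Nat.lt_succ_self m))

lemma trunc_sum (g : ℕ → ℝ) (K j : ℕ) :
    ∑ i ∈ Finset.range j, (if i ≤ K then g i else 0)
      = ∑ i ∈ Finset.range (min j (K+1)), g i := by
  rw [← Finset.sum_filter]
  congr 1
  ext i
  simp [Nat.lt_min, Nat.lt_succ_iff, and_comm]

lemma partialSum_eq {n : ℕ} (f : Fin n → ℝ) (k : Fin n) :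
    partialSum f k = ∑ i ∈ Finset.range (k.val + 1), extZ f i := by
  have h1 : partialSum f k = ∑ i : Fin n,
      (if (i : ℕ) ≤ (k : ℕ) then extZ f (i : ℕ) else 0) := by
    rw [partialSum, Finset.sum_filter]
    refine Finset.sum_congr rfl fun i _ => ?_
    have hi : (i : ℕ) < n := i.isLt
    simp only [extZ, hi, dif_pos, Fin.eta, Fin.le_def]
  rw [h1, Fin.sum_univ_eq_sum_range (fun i => if i ≤ (k : ℕ) then extZ f i else 0) n,
    trunc_sum, min_eq_right (Nat.succ_le_of_lt k.isLt)]

theorem weakMaj_entrywise_prod {n : ℕ} (x y a b : Fin n → ℝ)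
    (hx0 : ∀ i, 0 ≤ x i) (hy0 : ∀ i, 0 ≤ y i) (ha0 : ∀ i, 0 ≤ a i) (hb0 : ∀ i, 0 ≤ b i)
    (hx : Antitone x) (hy : Antitone y) (ha : Antitone a) (hb : Antitone b)
    (hxy : ∀ k : Fin n, partialSum x k ≤ partialSum y k)
    (hab : ∀ k : Fin n, partialSum a k ≤ partialSum b k) :
    ∀ k : Fin n, partialSum (fun i => x i * a i) k ≤ partialSum (fun i => y i * b i) k := by
  intro k
  set X := extZ x with hX
  set Y := extZ y with hY
  set A := extZ a with hA
  set B := extZ b with hB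
  -- basic facts about extensions
  have extmono : ∀ (f : Fin n → ℝ), Antitone f → ∀ i j, i ≤ j → j < n →
      extZ f j ≤ extZ f i := by
    intro f hf i j hij hj
    have hi : i < n := lt_of_le_of_lt hij hj
    simpa [extZ, hi, hj] using hf (show (⟨i, hi⟩ : Fin n) ≤ ⟨j, hj⟩ from hij)
  have extnn : ∀ (f : Fin n → ℝ), (∀ i, 0 ≤ f i) → ∀ i, 0 ≤ extZ f i := by
    intro f hf i
    by_cases h : i < n <;> simp [extZ, h, hf]
  -- prefix-sum comparisons in ℕ form
  have prefXY : ∀ j, j ≤ n → ∑ i ∈ Finset.range j, X i ≤ ∑ i ∈ Finset.range j, Y i := by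
    intro j hj
    match j with
    | 0 => simp
    | m + 1 =>
      have hm : m < n := hj
      have := hxy ⟨m, hm⟩
      rwa [partialSum_eq, partialSum_eq] at this
  have prefAB : ∀ j, j ≤ n → ∑ i ∈ Finset.range j, A i ≤ ∑ i ∈ Finset.range j, B i := by
    intro j hj
    match j with
    | 0 => simp
    | m + 1 =>
      have hm : m < n := hj
      have := hab ⟨m, hm⟩
      rwa [partialSum_eq, partialSum_eq] at this
  -- truncated versions of A and B
  set K := (k : ℕ) with hK
  set cA : ℕ → ℝ := fun i => if i ≤ K then A i else 0 with hcA
  set cB : ℕ → ℝ := fun i => if i ≤ K then B i else 0 with hcB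
  have cAmono : ∀ i j, i ≤ j → j < n → cA j ≤ cA i := by
    intro i j hij hj
    by_cases h : j ≤ K
    · have h' : i ≤ K := hij.trans h
      simpa [hcA, h, h'] using extmono a ha i j hij hj
    · by_cases h' : i ≤ K <;>
        simp [hcA, h, h', hA, extnn a ha0]
  have cAnn : ∀ i, 0 ≤ cA i := by
    intro i; by_cases h : i ≤ K <;> simp [hcA, h, hA, extnn a ha0]
  have Ymono : ∀ i j, i ≤ j → j < n → Y j ≤ Y i := extmono y hy
  have Ynn : ∀ i, 0 ≤ Y i := extnn y hy0
  -- prefix sums of cA are at most those of cB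
  have prefC : ∀ j, j ≤ n → ∑ i ∈ Finset.range j, cA i ≤ ∑ i ∈ Finset.range j, cB i := by
    intro j hj
    rw [hcA, hcB, trunc_sum, trunc_sum]
    exact prefAB _ (le_trans (min_le_left _ _) hj)
  -- step 1: replace X by Y
  have step1 : ∑ i ∈ Finset.range n, X i * cA i ≤ ∑ i ∈ Finset.range n, Y i * cA i :=
    abel_le n X Y cA cAmono (fun i _ => cAnn i) prefXY
  -- step 2: replace cA by cB
  have step2 : ∑ i ∈ Finset.range n, Y i * cA i ≤ ∑ i ∈ Finset.range n, Y i * cB i := by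
    have := abel_le n cA cB Y Ymono (fun i _ => Ynn i) prefC
    calc ∑ i ∈ Finset.range n, Y i * cA i = ∑ i ∈ Finset.range n, cA i * Y i := by
          simp [mul_comm]
      _ ≤ ∑ i ∈ Finset.range n, cB i * Y i := this
      _ = ∑ i ∈ Finset.range n, Y i * cB i := by simp [mul_comm]
  -- identify endpoints with partial sums
  have lhs_eq : partialSum (fun i => x i * a i) k = ∑ i ∈ Finset.range n, X i * cA i := by
    rw [partialSum_eq]
    have h1 : ∀ i, X i * cA i = if i ≤ K then extZ (fun i => x i * a i) i else 0 := by
      intro i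
      by_cases h : i ≤ K
      · have hi : i < n := lt_of_le_of_lt h k.isLt
        simp [hcA, h, hX, hA, extZ, hi]
      · simp [hcA, h]
    rw [Finset.sum_congr rfl (fun i _ => h1 i), trunc_sum,
      min_eq_right (Nat.succ_le_of_lt k.isLt)]
  have rhs_eq : partialSum (fun i => y i * b i) k = ∑ i ∈ Finset.range n, Y i * cB i := by
    rw [partialSum_eq]
    have h1 : ∀ i, Y i * cB i = if i ≤ K then extZ (fun i => y i * b i) i else 0 := by
      intro i
      by_cases h : i ≤ K
      · have hi : i < n := lt_of_le_of_lt h k.isLt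
        simp [hcB, h, hY, hB, extZ, hi]
      · simp [hcB, h]
    rw [Finset.sum_congr rfl (fun i _ => h1 i), trunc_sum,
      min_eq_right (Nat.succ_le_of_lt k.isLt)]
  rw [lhs_eq, rhs_eq]
  exact step1.trans step2
end

section
/- Let Φ : ℝ≥0 → ℝ≥0 be strictly convex and increasing. If a ≺_(log) b (log majorization) and ∑_{i=1}^n Φ(a_i) = ∑_{i=1}^n Φ(b_i), then a is a permutation of b. -/
open Finset

/-! ### Auxiliary machinery -/

/-- A "left derivative"-like subgradient of a convex function: the sup of slopes of
chords from the left. -/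
noncomputable def lsub (f : ℝ → ℝ) (x : ℝ) : ℝ :=
  sSup ((fun u => (f u - f x) / (u - x)) '' Set.Iio x)

lemma flipdiv (A B a b : ℝ) : (A - B) / (a - b) = (B - A) / (b - a) := by
  rw [← neg_div_neg_eq, neg_sub, neg_sub]

lemma lsub_image_nonempty (f : ℝ → ℝ) (x : ℝ) :
    ((fun u => (f u - f x) / (u - x)) '' Set.Iio x).Nonempty :=
  ⟨_, ⟨x - 1, by simp [sub_lt_self_iff], rfl⟩⟩

lemma lsub_bddAbove {f : ℝ → ℝ} (hf : ConvexOn ℝ Set.univ f) (x : ℝ) :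
    BddAbove ((fun u => (f u - f x) / (u - x)) '' Set.Iio x) := by
  refine ⟨(f (x + 1) - f x) / (x + 1 - x), ?_⟩
  rintro v ⟨u, hu, rfl⟩
  have hu' : u < x := hu
  exact hf.secant_mono (Set.mem_univ x) (Set.mem_univ u) (Set.mem_univ (x + 1))
    (ne_of_lt hu) (by linarith) (by linarith)

lemma le_lsub {f : ℝ → ℝ} (hf : ConvexOn ℝ Set.univ f) {u x : ℝ} (h : u < x) :
    (f u - f x) / (u - x) ≤ lsub f x :=
  le_csSup (lsub_bddAbove hf x) ⟨u, h, rfl⟩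

lemma lsub_le {f : ℝ → ℝ} (hf : ConvexOn ℝ Set.univ f) {x y : ℝ} (h : x < y) :
    lsub f x ≤ (f y - f x) / (y - x) := by
  refine csSup_le (lsub_image_nonempty f x) ?_
  rintro v ⟨u, hu, rfl⟩
  have hu' : u < x := hu
  exact hf.secant_mono (Set.mem_univ x) (Set.mem_univ u) (Set.mem_univ y)
    (ne_of_lt hu') (ne_of_gt h) (by linarith)

lemma lsub_mono {f : ℝ → ℝ} (hf : ConvexOn ℝ Set.univ f) : Monotone (lsub f) := by
  intro x y hxy
  rcases eq_or_lt_of_le hxy with rfl | hxy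
  · exact le_rfl
  refine csSup_le (lsub_image_nonempty f x) ?_
  rintro v ⟨u, hu, rfl⟩
  have hu' : u < x := hu
  show (f u - f x) / (u - x) ≤ lsub f y
  have h1 : (f x - f u) / (x - u) ≤ (f y - f u) / (y - u) :=
    hf.secant_mono (Set.mem_univ u) (Set.mem_univ x) (Set.mem_univ y)
      (ne_of_gt hu') (ne_of_gt (hu'.trans hxy)) (le_of_lt hxy)
  have h2 : (f u - f y) / (u - y) ≤ lsub f y := le_lsub hf (hu'.trans hxy)
  rw [flipdiv] at h2 ⊢
  linarith

lemma lsub_nonneg {f : ℝ → ℝ} (hf : ConvexOn ℝ Set.univ f) (hm : Monotone f) (x : ℝ) :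
    0 ≤ lsub f x := by
  have h := le_lsub hf (show x - 1 < x by linarith)
  have h1 : (f (x - 1) - f x) / (x - 1 - x) = f x - f (x - 1) := by
    rw [show x - 1 - x = -1 by ring, div_neg, div_one, neg_sub]
  have h2 : f (x - 1) ≤ f x := hm (by linarith)
  linarith

/-- The subgradient inequality. -/
lemma lsub_grad {f : ℝ → ℝ} (hf : ConvexOn ℝ Set.univ f) (x y : ℝ) :
    f x + lsub f x * (y - x) ≤ f y := by
  rcases lt_trichotomy x y with h | rfl | h
  · have h1 := lsub_le hf h
    rw [le_div_iff₀ (by linarith : (0:ℝ) < y - x)] at h1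
    linarith
  · simp
  · have h1 := le_lsub hf h
    rw [div_le_iff_of_neg (by linarith : y - x < 0)] at h1
    linarith

/-- The strict subgradient inequality, for a strictly convex function. -/
lemma lsub_grad_strict {f : ℝ → ℝ} (hf : ConvexOn ℝ Set.univ f) {S : Set ℝ}
    (hS : Convex ℝ S) (hsf : StrictConvexOn ℝ S f) {x y : ℝ}
    (hx : x ∈ S) (hy : y ∈ S) (hne : x ≠ y) :
    f x + lsub f x * (y - x) < f y := by
  have hm : (x + y) / 2 ∈ S := by
    have h := hS hx hy (by norm_num : (0:ℝ) ≤ 1/2) (by norm_num : (0:ℝ) ≤ 1/2)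
      (by norm_num : (1/2 : ℝ) + 1/2 = 1)
    rw [smul_eq_mul, smul_eq_mul] at h
    rwa [show (1/2 : ℝ) * x + (1/2 : ℝ) * y = (x + y)/2 by ring] at h
  rcases lt_or_gt_of_ne hne with h | h
  · -- x < y
    have hxm : x < (x + y) / 2 := by linarith
    have hmy : (x + y) / 2 < y := by linarith
    have h1 : lsub f x ≤ (f ((x + y)/2) - f x) / ((x + y)/2 - x) := lsub_le hf hxm
    have h2 : (f ((x + y)/2) - f x) / ((x + y)/2 - x) < (f y - f x) / (y - x) :=
      hsf.secant_strict_mono hx hm hy (ne_of_gt hxm) (ne_of_gt (hxm.trans hmy)) hmy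
    have h3 : lsub f x < (f y - f x) / (y - x) := lt_of_le_of_lt h1 h2
    rw [lt_div_iff₀ (by linarith : (0:ℝ) < y - x)] at h3
    linarith
  · -- y < x
    have hym : y < (x + y) / 2 := by linarith
    have hmx : (x + y) / 2 < x := by linarith
    have h1 : (f y - f x) / (y - x) < (f ((x + y)/2) - f x) / ((x + y)/2 - x) :=
      hsf.secant_strict_mono hx hy hm (ne_of_lt (hym.trans hmx)) (ne_of_lt hmx) hym
    have h2 : (f ((x + y)/2) - f x) / ((x + y)/2 - x) ≤ lsub f x := le_lsub hf hmx
    have h3 : (f y - f x) / (y - x) < lsub f x := lt_of_lt_of_le h1 h2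
    have h4 := mul_lt_mul_of_neg_right h3 (by linarith : y - x < 0)
    rw [div_mul_cancel₀ _ (by intro hc; apply hne; linarith : y - x ≠ 0)] at h4
    linarith

/-- Abel-summation style estimate. -/
lemma abel_aux (σ e : ℕ → ℝ) :
    ∀ (n : ℕ) (s : ℝ), (∀ i, i < n → s ≤ σ i) →
      (∀ i j, i ≤ j → j < n → σ j ≤ σ i) →
      (∀ k, k ≤ n → 0 ≤ ∑ i ∈ range k, e i) →
      s * (∑ i ∈ range n, e i) ≤ ∑ i ∈ range n, σ i * e i := by
  intro n
  induction n with
  | zero => intro s _ _ _; simp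
  | succ n ih =>
    intro s hs hmono hE
    have h1 : σ n * (∑ i ∈ range n, e i) ≤ ∑ i ∈ range n, σ i * e i :=
      ih (σ n) (fun i hi => hmono i n (le_of_lt hi) (Nat.lt_succ_self n))
        (fun i j hij hj => hmono i j hij (hj.trans (Nat.lt_succ_self n)))
        (fun k hk => hE k (hk.trans (Nat.le_succ n)))
    have h3 : s * (∑ i ∈ range (n+1), e i) ≤ σ n * (∑ i ∈ range (n+1), e i) :=
      mul_le_mul_of_nonneg_right (hs n (Nat.lt_succ_self n)) (hE (n+1) le_rfl)
    have h4 : ∑ i ∈ range (n+1), e i = (∑ i ∈ range n, e i) + e n := sum_range_succ e n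
    have h5 : ∑ i ∈ range (n+1), (fun i => σ i * e i) i
        = (∑ i ∈ range n, σ i * e i) + σ n * e n := sum_range_succ _ n
    rw [h4] at h3
    rw [h4, h5]
    nlinarith [h1, h3]

/-- Key inequality: if the partial sums of `c` are dominated by those of `d`, `c` is
nonincreasing, and `ψ` is convex and monotone, then `∑ ψ(c) ≤ ∑ ψ(d)`. -/
lemma core_le (ψ : ℝ → ℝ) (hconv : ConvexOn ℝ Set.univ ψ) (hmono : Monotone ψ)
    (n : ℕ) (c d : ℕ → ℝ) (hc : ∀ i j, i ≤ j → j < n → c j ≤ c i)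
    (hw : ∀ k, k ≤ n → ∑ i ∈ range k, c i ≤ ∑ i ∈ range k, d i) :
    ∑ i ∈ range n, ψ (c i) ≤ ∑ i ∈ range n, ψ (d i) := by
  have habel : 0 ≤ ∑ i ∈ range n, lsub ψ (c i) * (d i - c i) := by
    have h := abel_aux (fun i => lsub ψ (c i)) (fun i => d i - c i) n 0
      (fun i _ => lsub_nonneg hconv hmono (c i))
      (fun i j hij hj => lsub_mono hconv (hc i j hij hj))
      (fun k hk => by
        rw [sum_sub_distrib]
        linarith [hw k hk])
    simpa using h
  have hterm : ∀ i ∈ range n, lsub ψ (c i) * (d i - c i) ≤ ψ (d i) - ψ (c i) :=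
    fun i _ => by linarith [lsub_grad hconv (c i) (d i)]
  have hsum := sum_le_sum hterm
  rw [sum_sub_distrib] at hsum
  linarith

/-- Strict version of `core_le` when `c` and `d` differ somewhere and `ψ` is strictly
convex on a convex set containing all the values. -/
lemma core_lt (ψ : ℝ → ℝ) (hconv : ConvexOn ℝ Set.univ ψ) (hmono : Monotone ψ)
    (S : Set ℝ) (hS : Convex ℝ S) (hsc : StrictConvexOn ℝ S ψ)
    (n : ℕ) (c d : ℕ → ℝ) (hc : ∀ i j, i ≤ j → j < n → c j ≤ c i)
    (hw : ∀ k, k ≤ n → ∑ i ∈ range k, c i ≤ ∑ i ∈ range k, d i)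
    (hmem : ∀ i, i < n → c i ∈ S ∧ d i ∈ S)
    (i₀ : ℕ) (hi₀ : i₀ < n) (hne : c i₀ ≠ d i₀) :
    ∑ i ∈ range n, ψ (c i) < ∑ i ∈ range n, ψ (d i) := by
  have habel : 0 ≤ ∑ i ∈ range n, lsub ψ (c i) * (d i - c i) := by
    have h := abel_aux (fun i => lsub ψ (c i)) (fun i => d i - c i) n 0
      (fun i _ => lsub_nonneg hconv hmono (c i))
      (fun i j hij hj => lsub_mono hconv (hc i j hij hj))
      (fun k hk => by
        rw [sum_sub_distrib]
        linarith [hw k hk])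
    simpa using h
  have hterm : ∀ i ∈ range n, lsub ψ (c i) * (d i - c i) ≤ ψ (d i) - ψ (c i) :=
    fun i _ => by linarith [lsub_grad hconv (c i) (d i)]
  have hstrict : lsub ψ (c i₀) * (d i₀ - c i₀) < ψ (d i₀) - ψ (c i₀) := by
    have := lsub_grad_strict hconv hS hsc (hmem i₀ hi₀).1 (hmem i₀ hi₀).2 hne
    linarith
  have hsum : ∑ i ∈ range n, lsub ψ (c i) * (d i - c i) <
      ∑ i ∈ range n, (ψ (d i) - ψ (c i)) :=
    sum_lt_sum hterm ⟨i₀, mem_range.mpr hi₀, hstrict⟩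
  rw [sum_sub_distrib] at hsum
  linarith

/-- Weyl's argument: log-majorization implies weak majorization (ℕ-indexed version). -/
lemma weyl_aux (n : ℕ) (a b : ℕ → ℝ) (ha0 : ∀ i, 0 ≤ a i) (hb0 : ∀ i, 0 ≤ b i)
    (ha : ∀ i j, i ≤ j → j < n → a j ≤ a i)
    (hlog : ∀ m, m ≤ n → ∏ i ∈ range m, a i ≤ ∏ i ∈ range m, b i) :
    ∀ k, k ≤ n → ∑ i ∈ range k, a i ≤ ∑ i ∈ range k, b i := by
  intro k
  induction k with
  | zero => intro _; simp
  | succ k ih =>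
    intro hk
    by_cases hak : 0 < a k
    · have hapos : ∀ i, i < k + 1 → 0 < a i := by
        intro i hi
        exact lt_of_lt_of_le hak (ha i k (Nat.lt_succ_iff.mp hi) hk)
      have haprodpos : ∀ m, m ≤ k + 1 → 0 < ∏ i ∈ range m, a i := by
        intro m hm
        exact prod_pos fun i hi => hapos i (lt_of_lt_of_le (mem_range.mp hi) hm)
      have hbpos : ∀ i, i < k + 1 → 0 < b i := by
        intro i hi
        by_contra hbc
        push_neg at hbc
        have hb0' : b i = 0 := le_antisymm hbc (hb0 i)
        have h1 : (0:ℝ) < ∏ j ∈ range (i+1), a j := haprodpos (i+1) hi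
        have h2 : ∏ j ∈ range (i+1), b j = 0 :=
          prod_eq_zero (mem_range.mpr (Nat.lt_succ_self i)) hb0'
        have h3 := hlog (i+1) (le_trans hi hk)
        rw [h2] at h3
        linarith
      have hcore := core_le Real.exp convexOn_exp Real.exp_monotone (k + 1)
        (fun i => Real.log (a i)) (fun i => Real.log (b i))
        (fun i j hij hj => (Real.log_le_log_iff (hapos j hj)
          (hapos i (lt_of_le_of_lt hij hj))).mpr (ha i j hij (lt_of_lt_of_le hj hk)))
        (fun m hm => by
          rw [← Real.log_prod (fun i hi => ne_of_gt (hapos i (lt_of_lt_of_le (mem_range.mp hi) hm))),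
            ← Real.log_prod (fun i hi => ne_of_gt (hbpos i (lt_of_lt_of_le (mem_range.mp hi) hm)))]
          exact (Real.log_le_log_iff (haprodpos m hm)
            (lt_of_lt_of_le (haprodpos m hm) (hlog m (hm.trans hk)))).mpr (hlog m (hm.trans hk)))
      calc ∑ i ∈ range (k+1), a i
          = ∑ i ∈ range (k+1), Real.exp (Real.log (a i)) := by
            exact (sum_congr rfl fun i hi => (Real.exp_log (hapos i (mem_range.mp hi))).symm)
        _ ≤ ∑ i ∈ range (k+1), Real.exp (Real.log (b i)) := hcore
        _ = ∑ i ∈ range (k+1), b i :=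
            sum_congr rfl fun i hi => Real.exp_log (hbpos i (mem_range.mp hi))
    · push_neg at hak
      have hak0 : a k = 0 := le_antisymm hak (ha0 k)
      rw [sum_range_succ, sum_range_succ, hak0, add_zero]
      exact le_trans (ih (Nat.le_of_succ_le hk)) (le_add_of_nonneg_right (hb0 k))

/-- Extension of a `Fin n`-indexed vector to `ℕ` by zero. -/
noncomputable def extf {n : ℕ} (f : Fin n → ℝ) : ℕ → ℝ :=
  fun i => if h : i < n then f ⟨i, h⟩ else 0

lemma filter_le_eq_range {n : ℕ} (k : Fin n) :
    (range n).filter (fun i => i ≤ (k : ℕ)) = range ((k : ℕ) + 1) := by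
  ext i
  simp only [mem_filter, mem_range]
  omega

lemma partial_sum_ext {n : ℕ} (f : Fin n → ℝ) (k : Fin n) :
    ∑ i ∈ Finset.univ.filter (fun i => i ≤ k), f i = ∑ i ∈ range ((k : ℕ) + 1), extf f i := by
  classical
  calc ∑ i ∈ Finset.univ.filter (fun i => i ≤ k), f i
      = ∑ j : Fin n, if j ≤ k then f j else 0 := sum_filter _ _
    _ = ∑ j : Fin n, (fun m => if h : m < n then (if m ≤ (k : ℕ) then f ⟨m, h⟩ else 0) else 0) (j : ℕ) := by
        refine sum_congr rfl fun j _ => ?_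
        beta_reduce
        by_cases hjk : j ≤ k
        · rw [if_pos hjk, dif_pos j.isLt, if_pos (show (j:ℕ) ≤ (k:ℕ) from hjk), Fin.eta]
        · rw [if_neg hjk, dif_pos j.isLt, if_neg (show ¬((j:ℕ) ≤ (k:ℕ)) from fun h => hjk h)]
    _ = ∑ m ∈ range n, (fun m => if h : m < n then (if m ≤ (k : ℕ) then f ⟨m, h⟩ else 0) else 0) m :=
        Fin.sum_univ_eq_sum_range (fun m => if h : m < n then (if m ≤ (k : ℕ) then f ⟨m, h⟩ else 0) else 0) n
    _ = ∑ m ∈ range n, if m ≤ (k : ℕ) then extf f m else 0 := by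
        refine sum_congr rfl fun m hm => ?_
        simp [extf, mem_range.mp hm]
    _ = ∑ m ∈ (range n).filter (fun i => i ≤ (k : ℕ)), extf f m := (sum_filter _ _).symm
    _ = ∑ m ∈ range ((k : ℕ) + 1), extf f m := by rw [filter_le_eq_range]

lemma partial_prod_ext {n : ℕ} (f : Fin n → ℝ) (k : Fin n) :
    ∏ i ∈ Finset.univ.filter (fun i => i ≤ k), f i = ∏ i ∈ range ((k : ℕ) + 1), extf f i := by
  classical
  calc ∏ i ∈ Finset.univ.filter (fun i => i ≤ k), f i
      = ∏ j : Fin n, if j ≤ k then f j else 1 := prod_filter _ _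
    _ = ∏ j : Fin n, (fun m => if h : m < n then (if m ≤ (k : ℕ) then f ⟨m, h⟩ else 1) else 1) (j : ℕ) := by
        refine prod_congr rfl fun j _ => ?_
        beta_reduce
        by_cases hjk : j ≤ k
        · rw [if_pos hjk, dif_pos j.isLt, if_pos (show (j:ℕ) ≤ (k:ℕ) from hjk), Fin.eta]
        · rw [if_neg hjk, dif_pos j.isLt, if_neg (show ¬((j:ℕ) ≤ (k:ℕ)) from fun h => hjk h)]
    _ = ∏ m ∈ range n, (fun m => if h : m < n then (if m ≤ (k : ℕ) then f ⟨m, h⟩ else 1) else 1) m :=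
        Fin.prod_univ_eq_prod_range (fun m => if h : m < n then (if m ≤ (k : ℕ) then f ⟨m, h⟩ else 1) else 1) n
    _ = ∏ m ∈ range n, if m ≤ (k : ℕ) then extf f m else 1 := by
        refine prod_congr rfl fun m hm => ?_
        simp [extf, mem_range.mp hm]
    _ = ∏ m ∈ (range n).filter (fun i => i ≤ (k : ℕ)), extf f m := (prod_filter _ _).symm
    _ = ∏ m ∈ range ((k : ℕ) + 1), extf f m := by rw [filter_le_eq_range]

theorem logMaj_strictConvex_eq_imp_perm {n : ℕ} (Φ : ℝ → ℝ)
    (hΦconv : StrictConvexOn ℝ (Set.Ici (0 : ℝ)) Φ)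
    (hΦmono : MonotoneOn Φ (Set.Ici (0 : ℝ)))
    (hΦ0 : ∀ x : ℝ, 0 ≤ x → 0 ≤ Φ x)
    (a b : Fin n → ℝ)
    (ha0 : ∀ i, 0 ≤ a i) (hb0 : ∀ i, 0 ≤ b i) (ha : Antitone a) (hb : Antitone b)
    (hlog : ∀ k : Fin n, partialProd a k ≤ partialProd b k)
    (hlogEq : ∏ i, a i = ∏ i, b i)
    (hΦeq : ∑ i, Φ (a i) = ∑ i, Φ (b i)) :
    ∃ e : Equiv.Perm (Fin n), a = b ∘ e := by
  -- the extension of Φ to all of ℝ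
  set Φt : ℝ → ℝ := fun x => Φ (max x 0) with hΦt
  have hmax0 : ∀ x : ℝ, max x 0 ∈ Set.Ici (0 : ℝ) := fun x => Set.mem_Ici.mpr (le_max_right x 0)
  have hmonot : Monotone Φt := fun x y h => hΦmono (hmax0 x) (hmax0 y) (max_le_max h le_rfl)
  have hconvt : ConvexOn ℝ Set.univ Φt := by
    refine ⟨convex_univ, fun x _ y _ s t hs ht hst => ?_⟩
    have hcomb : (0:ℝ) ≤ s * max x 0 + t * max y 0 :=
      add_nonneg (mul_nonneg hs (le_max_right x 0)) (mul_nonneg ht (le_max_right y 0))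
    have h1 : max (s • x + t • y) 0 ≤ s * max x 0 + t * max y 0 := by
      refine max_le ?_ hcomb
      simp only [smul_eq_mul]
      exact add_le_add (mul_le_mul_of_nonneg_left (le_max_left x 0) hs)
        (mul_le_mul_of_nonneg_left (le_max_left y 0) ht)
    calc Φt (s • x + t • y) = Φ (max (s • x + t • y) 0) := rfl
      _ ≤ Φ (s * max x 0 + t * max y 0) := hΦmono (hmax0 _) (Set.mem_Ici.mpr hcomb) h1
      _ = Φ (s • max x 0 + t • max y 0) := by simp [smul_eq_mul]
      _ ≤ s • Φ (max x 0) + t • Φ (max y 0) :=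
          hΦconv.convexOn.2 (hmax0 x) (hmax0 y) hs ht hst
      _ = s • Φt x + t • Φt y := rfl
  have hsct : StrictConvexOn ℝ (Set.Ici (0:ℝ)) Φt := by
    refine ⟨convex_Ici 0, fun x hx y hy hne s t hs ht hst => ?_⟩
    have hx0 : (0:ℝ) ≤ x := hx
    have hy0 : (0:ℝ) ≤ y := hy
    have hcomb : (0:ℝ) ≤ s • x + t • y := by
      simp only [smul_eq_mul]
      exact add_nonneg (mul_nonneg hs.le hx0) (mul_nonneg ht.le hy0)
    have e1 : Φt x = Φ x := by
      show Φ (max x 0) = Φ x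
      rw [max_eq_left hx0]
    have e2 : Φt y = Φ y := by
      show Φ (max y 0) = Φ y
      rw [max_eq_left hy0]
    have e3 : Φt (s • x + t • y) = Φ (s • x + t • y) := by
      show Φ (max (s • x + t • y) 0) = Φ (s • x + t • y)
      rw [max_eq_left hcomb]
    rw [e1, e2, e3]
    exact hΦconv.2 hx hy hne hs ht hst
  -- weak majorization via Weyl's argument
  have ha' : ∀ i j, i ≤ j → j < n → extf a j ≤ extf a i := by
    intro i j hij hj
    have hi : i < n := lt_of_le_of_lt hij hj
    simp only [extf, dif_pos hi, dif_pos hj]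
    exact ha (show (⟨i, hi⟩ : Fin n) ≤ ⟨j, hj⟩ from hij)
  have ha0' : ∀ i, 0 ≤ extf a i := by
    intro i; simp only [extf]; split <;> simp [ha0, le_refl]
  have hb0' : ∀ i, 0 ≤ extf b i := by
    intro i; simp only [extf]; split <;> simp [hb0, le_refl]
  have hlog' : ∀ m, m ≤ n → ∏ i ∈ range m, extf a i ≤ ∏ i ∈ range m, extf b i := by
    intro m hm
    match m with
    | 0 => simp
    | m + 1 =>
      have hm' : m < n := hm
      have := hlog ⟨m, hm'⟩
      rwa [partialProd, partialProd, partial_prod_ext, partial_prod_ext] at this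
  have hw : ∀ k, k ≤ n → ∑ i ∈ range k, extf a i ≤ ∑ i ∈ range k, extf b i :=
    weyl_aux n (extf a) (extf b) ha0' hb0' ha' hlog'
  -- reduce to a = b
  suffices hab : a = b by
    exact ⟨Equiv.refl _, by simpa using hab⟩
  by_contra hab
  obtain ⟨i₀, hi₀⟩ := Function.ne_iff.mp hab
  have hne' : extf a (i₀ : ℕ) ≠ extf b (i₀ : ℕ) := by
    simpa [extf, i₀.isLt] using hi₀
  have hcore := core_lt Φt hconvt hmonot (Set.Ici 0) (convex_Ici 0) hsct n
    (extf a) (extf b) ha' hw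
    (fun i _ => ⟨ha0' i, hb0' i⟩) (i₀ : ℕ) i₀.isLt hne'
  have hca : ∑ i ∈ range n, Φt (extf a i) = ∑ i, Φ (a i) := by
    rw [← Fin.sum_univ_eq_sum_range (fun m => Φt (extf a m)) n]
    refine sum_congr rfl fun j _ => ?_
    simp [hΦt, extf, j.isLt, max_eq_left (ha0 j)]
  have hcb : ∑ i ∈ range n, Φt (extf b i) = ∑ i, Φ (b i) := by
    rw [← Fin.sum_univ_eq_sum_range (fun m => Φt (extf b m)) n]
    refine sum_congr rfl fun j _ => ?_
    simp [hΦt, extf, j.isLt, max_eq_left (hb0 j)]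
  rw [hca, hcb] at hcore
  exact absurd hΦeq (ne_of_lt hcore)
end
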